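/- Under the homogeneous DPP difference system with the stated regularity, boundary-condition encodings (H1)–(H2), and energy E(t), the energy satisfies the logarithmic-convexity inequality (E′(t))² ≤ E(t)·E″(t) for every t ∈ [0,T]. -/

import Mathlib

open Set MeasureTheory Matrix

/-- Divergence associated with a (spatial) Jacobian, i.e. the trace of the Fréchet
derivative of a vector field on ℝ³. -/
noncomputable def divOf (J : (Fin 3 → ℝ) →L[ℝ] (Fin 3 → ℝ)) : ℝ :=
  ∑ j : Fin 3, J (Pi.single j 1) j

/-- The continuous linear map `v ↦ g · v` associated with a gradient vector `g`;
`HasFDerivAt q (gradCLM g) x` says `g` is the spatial gradient of `q` at `x`. -/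
noncomputable def gradCLM (g : Fin 3 → ℝ) : (Fin 3 → ℝ) →L[ℝ] ℝ :=
  ∑ j : Fin 3, g j • (ContinuousLinearMap.proj j : (Fin 3 → ℝ) →L[ℝ] ℝ)

/-- The homogeneous double porosity/permeability (DPP) difference system on a bounded open
domain `Ω ⊆ ℝ³` and time interval `[0,T]`, together with all the regularity assumptions and
the boundary-condition encodings (H1)–(H2) described in the paper.

Fields `w₁, w₂` (velocity differences) and `q₁, q₂` (pressure differences) satisfy
`(γ/φᵢ) ∂wᵢ/∂t + μ Kᵢ⁻¹ wᵢ + ∇qᵢ = 0`, `div w₁ = −(β/μ)(q₁−q₂)`, `div w₂ = +(β/μ)(q₁−q₂)`.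
The time derivatives `dwᵢ, dqᵢ`, the spatial gradients `gqᵢ`, and the spatial Jacobians
`Jwᵢ, Jdwᵢ` (whose traces are the divergences of `wᵢ` and of `∂wᵢ/∂t`) are carried as data,
tied to the fields by `HasDerivWithinAt`/`HasFDerivAt` hypotheses. The hypothesis `leibniz`
expresses that differentiation in `t` under the integral over `Ω` is valid (for continuous
bounded integrands with continuous bounded time derivatives). -/
structure DPP where
  Ω : Set (Fin 3 → ℝ)
  hΩopen : IsOpen Ω
  hΩbdd : Bornology.IsBounded Ω
  T : ℝ
  hT : 0 < T
  γ : ℝ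
  μ : ℝ
  β : ℝ
  hγ : 0 < γ
  hμ : 0 < μ
  hβ : 0 < β
  φ₁ : (Fin 3 → ℝ) → ℝ
  φ₂ : (Fin 3 → ℝ) → ℝ
  hφ₁pos : ∀ x ∈ Ω, 0 < φ₁ x
  hφ₂pos : ∀ x ∈ Ω, 0 < φ₂ x
  hφ₁cont : ContinuousOn φ₁ Ω
  hφ₂cont : ContinuousOn φ₂ Ω
  hφ₁bdd : ∃ c > (0:ℝ), ∃ C : ℝ, ∀ x ∈ Ω, c ≤ φ₁ x ∧ φ₁ x ≤ C
  hφ₂bdd : ∃ c > (0:ℝ), ∃ C : ℝ, ∀ x ∈ Ω, c ≤ φ₂ x ∧ φ₂ x ≤ C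
  K₁ : (Fin 3 → ℝ) → Matrix (Fin 3) (Fin 3) ℝ
  K₂ : (Fin 3 → ℝ) → Matrix (Fin 3) (Fin 3) ℝ
  hK₁symm : ∀ x ∈ Ω, (K₁ x).IsSymm
  hK₂symm : ∀ x ∈ Ω, (K₂ x).IsSymm
  hK₁pd : ∀ x ∈ Ω, (K₁ x).PosDef
  hK₂pd : ∀ x ∈ Ω, (K₂ x).PosDef
  hK₁invcont : ∀ i j, ContinuousOn (fun x => (K₁ x)⁻¹ i j) Ω
  hK₂invcont : ∀ i j, ContinuousOn (fun x => (K₂ x)⁻¹ i j) Ω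
  hK₁invbdd : ∃ C : ℝ, ∀ x ∈ Ω, ∀ i j, |(K₁ x)⁻¹ i j| ≤ C
  hK₂invbdd : ∃ C : ℝ, ∀ x ∈ Ω, ∀ i j, |(K₂ x)⁻¹ i j| ≤ C
  -- the fields of the difference system
  w₁ : (Fin 3 → ℝ) → ℝ → (Fin 3 → ℝ)
  w₂ : (Fin 3 → ℝ) → ℝ → (Fin 3 → ℝ)
  q₁ : (Fin 3 → ℝ) → ℝ → ℝ
  q₂ : (Fin 3 → ℝ) → ℝ → ℝ
  -- derivative data: time derivatives, spatial gradients, spatial Jacobians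
  dw₁ : (Fin 3 → ℝ) → ℝ → (Fin 3 → ℝ)
  dw₂ : (Fin 3 → ℝ) → ℝ → (Fin 3 → ℝ)
  dq₁ : (Fin 3 → ℝ) → ℝ → ℝ
  dq₂ : (Fin 3 → ℝ) → ℝ → ℝ
  gq₁ : (Fin 3 → ℝ) → ℝ → (Fin 3 → ℝ)
  gq₂ : (Fin 3 → ℝ) → ℝ → (Fin 3 → ℝ)
  Jw₁ : (Fin 3 → ℝ) → ℝ → ((Fin 3 → ℝ) →L[ℝ] (Fin 3 → ℝ))
  Jw₂ : (Fin 3 → ℝ) → ℝ → ((Fin 3 → ℝ) →L[ℝ] (Fin 3 → ℝ))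
  Jdw₁ : (Fin 3 → ℝ) → ℝ → ((Fin 3 → ℝ) →L[ℝ] (Fin 3 → ℝ))
  Jdw₂ : (Fin 3 → ℝ) → ℝ → ((Fin 3 → ℝ) →L[ℝ] (Fin 3 → ℝ))
  -- C¹ regularity in time: the data are the actual derivatives
  hdw₁ : ∀ x ∈ Ω, ∀ t ∈ Icc (0:ℝ) T, HasDerivWithinAt (w₁ x) (dw₁ x t) (Icc (0:ℝ) T) t
  hdw₂ : ∀ x ∈ Ω, ∀ t ∈ Icc (0:ℝ) T, HasDerivWithinAt (w₂ x) (dw₂ x t) (Icc (0:ℝ) T) t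
  hdq₁ : ∀ x ∈ Ω, ∀ t ∈ Icc (0:ℝ) T, HasDerivWithinAt (q₁ x) (dq₁ x t) (Icc (0:ℝ) T) t
  hdq₂ : ∀ x ∈ Ω, ∀ t ∈ Icc (0:ℝ) T, HasDerivWithinAt (q₂ x) (dq₂ x t) (Icc (0:ℝ) T) t
  -- C¹ regularity in space: gradients and Jacobians
  hgq₁ : ∀ t ∈ Icc (0:ℝ) T, ∀ x ∈ Ω, HasFDerivAt (fun y => q₁ y t) (gradCLM (gq₁ x t)) x
  hgq₂ : ∀ t ∈ Icc (0:ℝ) T, ∀ x ∈ Ω, HasFDerivAt (fun y => q₂ y t) (gradCLM (gq₂ x t)) x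
  hJw₁ : ∀ t ∈ Icc (0:ℝ) T, ∀ x ∈ Ω, HasFDerivAt (fun y => w₁ y t) (Jw₁ x t) x
  hJw₂ : ∀ t ∈ Icc (0:ℝ) T, ∀ x ∈ Ω, HasFDerivAt (fun y => w₂ y t) (Jw₂ x t) x
  hJdw₁ : ∀ t ∈ Icc (0:ℝ) T, ∀ x ∈ Ω, HasFDerivAt (fun y => dw₁ y t) (Jdw₁ x t) x
  hJdw₂ : ∀ t ∈ Icc (0:ℝ) T, ∀ x ∈ Ω, HasFDerivAt (fun y => dw₂ y t) (Jdw₂ x t) x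
  -- `div (∂wᵢ/∂t) = ∂(div wᵢ)/∂t`
  hdivcomm₁ : ∀ x ∈ Ω, ∀ t ∈ Icc (0:ℝ) T,
    HasDerivWithinAt (fun s => divOf (Jw₁ x s)) (divOf (Jdw₁ x t)) (Icc (0:ℝ) T) t
  hdivcomm₂ : ∀ x ∈ Ω, ∀ t ∈ Icc (0:ℝ) T,
    HasDerivWithinAt (fun s => divOf (Jw₂ x s)) (divOf (Jdw₂ x t)) (Icc (0:ℝ) T) t
  -- joint continuity of the fields and of their appearing first derivatives
  hw₁cont : ContinuousOn (fun p : (Fin 3 → ℝ) × ℝ => w₁ p.1 p.2) (Ω ×ˢ Icc (0:ℝ) T)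
  hw₂cont : ContinuousOn (fun p : (Fin 3 → ℝ) × ℝ => w₂ p.1 p.2) (Ω ×ˢ Icc (0:ℝ) T)
  hq₁cont : ContinuousOn (fun p : (Fin 3 → ℝ) × ℝ => q₁ p.1 p.2) (Ω ×ˢ Icc (0:ℝ) T)
  hq₂cont : ContinuousOn (fun p : (Fin 3 → ℝ) × ℝ => q₂ p.1 p.2) (Ω ×ˢ Icc (0:ℝ) T)
  hdw₁cont : ContinuousOn (fun p : (Fin 3 → ℝ) × ℝ => dw₁ p.1 p.2) (Ω ×ˢ Icc (0:ℝ) T)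
  hdw₂cont : ContinuousOn (fun p : (Fin 3 → ℝ) × ℝ => dw₂ p.1 p.2) (Ω ×ˢ Icc (0:ℝ) T)
  hdq₁cont : ContinuousOn (fun p : (Fin 3 → ℝ) × ℝ => dq₁ p.1 p.2) (Ω ×ˢ Icc (0:ℝ) T)
  hdq₂cont : ContinuousOn (fun p : (Fin 3 → ℝ) × ℝ => dq₂ p.1 p.2) (Ω ×ˢ Icc (0:ℝ) T)
  hgq₁cont : ContinuousOn (fun p : (Fin 3 → ℝ) × ℝ => gq₁ p.1 p.2) (Ω ×ˢ Icc (0:ℝ) T)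
  hgq₂cont : ContinuousOn (fun p : (Fin 3 → ℝ) × ℝ => gq₂ p.1 p.2) (Ω ×ˢ Icc (0:ℝ) T)
  hdivw₁cont : ContinuousOn (fun p : (Fin 3 → ℝ) × ℝ => divOf (Jw₁ p.1 p.2)) (Ω ×ˢ Icc (0:ℝ) T)
  hdivw₂cont : ContinuousOn (fun p : (Fin 3 → ℝ) × ℝ => divOf (Jw₂ p.1 p.2)) (Ω ×ˢ Icc (0:ℝ) T)
  hdivdw₁cont : ContinuousOn (fun p : (Fin 3 → ℝ) × ℝ => divOf (Jdw₁ p.1 p.2)) (Ω ×ˢ Icc (0:ℝ) T)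
  hdivdw₂cont : ContinuousOn (fun p : (Fin 3 → ℝ) × ℝ => divOf (Jdw₂ p.1 p.2)) (Ω ×ˢ Icc (0:ℝ) T)
  -- boundedness of the fields and of their appearing first derivatives
  hw₁bdd : ∃ C : ℝ, ∀ x ∈ Ω, ∀ t ∈ Icc (0:ℝ) T, ‖w₁ x t‖ ≤ C
  hw₂bdd : ∃ C : ℝ, ∀ x ∈ Ω, ∀ t ∈ Icc (0:ℝ) T, ‖w₂ x t‖ ≤ C
  hq₁bdd : ∃ C : ℝ, ∀ x ∈ Ω, ∀ t ∈ Icc (0:ℝ) T, |q₁ x t| ≤ C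
  hq₂bdd : ∃ C : ℝ, ∀ x ∈ Ω, ∀ t ∈ Icc (0:ℝ) T, |q₂ x t| ≤ C
  hdw₁bdd : ∃ C : ℝ, ∀ x ∈ Ω, ∀ t ∈ Icc (0:ℝ) T, ‖dw₁ x t‖ ≤ C
  hdw₂bdd : ∃ C : ℝ, ∀ x ∈ Ω, ∀ t ∈ Icc (0:ℝ) T, ‖dw₂ x t‖ ≤ C
  hdq₁bdd : ∃ C : ℝ, ∀ x ∈ Ω, ∀ t ∈ Icc (0:ℝ) T, |dq₁ x t| ≤ C
  hdq₂bdd : ∃ C : ℝ, ∀ x ∈ Ω, ∀ t ∈ Icc (0:ℝ) T, |dq₂ x t| ≤ C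
  hgq₁bdd : ∃ C : ℝ, ∀ x ∈ Ω, ∀ t ∈ Icc (0:ℝ) T, ‖gq₁ x t‖ ≤ C
  hgq₂bdd : ∃ C : ℝ, ∀ x ∈ Ω, ∀ t ∈ Icc (0:ℝ) T, ‖gq₂ x t‖ ≤ C
  hdivw₁bdd : ∃ C : ℝ, ∀ x ∈ Ω, ∀ t ∈ Icc (0:ℝ) T, |divOf (Jw₁ x t)| ≤ C
  hdivw₂bdd : ∃ C : ℝ, ∀ x ∈ Ω, ∀ t ∈ Icc (0:ℝ) T, |divOf (Jw₂ x t)| ≤ C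
  hdivdw₁bdd : ∃ C : ℝ, ∀ x ∈ Ω, ∀ t ∈ Icc (0:ℝ) T, |divOf (Jdw₁ x t)| ≤ C
  hdivdw₂bdd : ∃ C : ℝ, ∀ x ∈ Ω, ∀ t ∈ Icc (0:ℝ) T, |divOf (Jdw₂ x t)| ≤ C
  -- the homogeneous DPP difference system
  pde₁ : ∀ x ∈ Ω, ∀ t ∈ Icc (0:ℝ) T,
    (γ / φ₁ x) • dw₁ x t + μ • ((K₁ x)⁻¹ *ᵥ w₁ x t) + gq₁ x t = 0
  pde₂ : ∀ x ∈ Ω, ∀ t ∈ Icc (0:ℝ) T,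
    (γ / φ₂ x) • dw₂ x t + μ • ((K₂ x)⁻¹ *ᵥ w₂ x t) + gq₂ x t = 0
  mass₁ : ∀ x ∈ Ω, ∀ t ∈ Icc (0:ℝ) T, divOf (Jw₁ x t) = -(β / μ) * (q₁ x t - q₂ x t)
  mass₂ : ∀ x ∈ Ω, ∀ t ∈ Icc (0:ℝ) T, divOf (Jw₂ x t) = (β / μ) * (q₁ x t - q₂ x t)
  -- boundary-condition encodings (H1)–(H2)
  H1₁ : ∀ t ∈ Icc (0:ℝ) T,
    (∫ x in Ω, (w₁ x t ⬝ᵥ gq₁ x t + q₁ x t * divOf (Jw₁ x t))) = 0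
  H1₂ : ∀ t ∈ Icc (0:ℝ) T,
    (∫ x in Ω, (w₂ x t ⬝ᵥ gq₂ x t + q₂ x t * divOf (Jw₂ x t))) = 0
  H2₁ : ∀ t ∈ Icc (0:ℝ) T,
    (∫ x in Ω, (dw₁ x t ⬝ᵥ gq₁ x t + q₁ x t * divOf (Jdw₁ x t))) = 0
  H2₂ : ∀ t ∈ Icc (0:ℝ) T,
    (∫ x in Ω, (dw₂ x t ⬝ᵥ gq₂ x t + q₂ x t * divOf (Jdw₂ x t))) = 0
  -- differentiation in `t` under the integral over `Ω` is valid
  leibniz : ∀ F F' : (Fin 3 → ℝ) → ℝ → ℝ,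
    (∀ x ∈ Ω, ∀ t ∈ Icc (0:ℝ) T, HasDerivWithinAt (F x) (F' x t) (Icc (0:ℝ) T) t) →
    ContinuousOn (fun p : (Fin 3 → ℝ) × ℝ => F p.1 p.2) (Ω ×ˢ Icc (0:ℝ) T) →
    ContinuousOn (fun p : (Fin 3 → ℝ) × ℝ => F' p.1 p.2) (Ω ×ˢ Icc (0:ℝ) T) →
    (∃ C : ℝ, ∀ x ∈ Ω, ∀ t ∈ Icc (0:ℝ) T, |F x t| ≤ C) →
    (∃ C : ℝ, ∀ x ∈ Ω, ∀ t ∈ Icc (0:ℝ) T, |F' x t| ≤ C) →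
    ∀ t ∈ Icc (0:ℝ) T,
      HasDerivWithinAt (fun s => ∫ x in Ω, F x s) (∫ x in Ω, F' x t) (Icc (0:ℝ) T) t

/-- The (kinetic) energy `E(t) = ∫_Ω [ γ/(2φ₁) |w₁|² + γ/(2φ₂) |w₂|² ] dx` of the
difference system. -/
noncomputable def DPP.E (S : DPP) : ℝ → ℝ := fun t =>
  ∫ x in S.Ω, ((S.γ / (2 * S.φ₁ x)) * (S.w₁ x t ⬝ᵥ S.w₁ x t)
    + (S.γ / (2 * S.φ₂ x)) * (S.w₂ x t ⬝ᵥ S.w₂ x t))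


namespace DPPAux

/-- continuous and bounded (in absolute value) on a set. -/
def CB {α : Type*} [TopologicalSpace α] (P : Set α) (f : α → ℝ) : Prop :=
  ContinuousOn f P ∧ ∃ C : ℝ, ∀ x ∈ P, |f x| ≤ C

variable {α : Type*} [TopologicalSpace α] {P : Set α} {f g : α → ℝ}

theorem CB.const (c : ℝ) : CB P (fun _ => c) :=
  ⟨continuousOn_const, ⟨|c|, fun _ _ => le_rfl⟩⟩

theorem CB.add (hf : CB P f) (hg : CB P g) : CB P (fun x => f x + g x) := by
  obtain ⟨hfc, Cf, hCf⟩ := hf; obtain ⟨hgc, Cg, hCg⟩ := hg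
  exact ⟨hfc.add hgc, Cf + Cg, fun x hx =>
    (abs_add_le _ _).trans (add_le_add (hCf x hx) (hCg x hx))⟩

theorem CB.mul (hf : CB P f) (hg : CB P g) : CB P (fun x => f x * g x) := by
  obtain ⟨hfc, Cf, hCf⟩ := hf; obtain ⟨hgc, Cg, hCg⟩ := hg
  refine ⟨hfc.mul hgc, Cf * Cg, fun x hx => ?_⟩
  rw [abs_mul]
  exact mul_le_mul (hCf x hx) (hCg x hx) (abs_nonneg _) ((abs_nonneg _).trans (hCf x hx))

theorem CB.neg (hf : CB P f) : CB P (fun x => -f x) := by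
  obtain ⟨hfc, Cf, hCf⟩ := hf
  exact ⟨hfc.neg, Cf, fun x hx => by rw [abs_neg]; exact hCf x hx⟩

theorem CB.sub (hf : CB P f) (hg : CB P g) : CB P (fun x => f x - g x) := by
  simpa [sub_eq_add_neg] using hf.add hg.neg

theorem CB.sum {ι : Type*} {u : Finset ι} {F : ι → α → ℝ}
    (h : ∀ i ∈ u, CB P (F i)) : CB P (fun x => ∑ i ∈ u, F i x) := by
  classical
  induction u using Finset.induction_on with
  | empty => simpa using CB.const (P := P) (0:ℝ)
  | @insert a s ha ih =>
    have : (fun x => ∑ i ∈ insert a s, F i x) = fun x => F a x + ∑ i ∈ s, F i x :=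
      funext fun x => Finset.sum_insert ha
    rw [this]
    exact (h a (Finset.mem_insert_self a s)).add (ih fun i hi => h i (Finset.mem_insert_of_mem hi))

theorem CB.dot {f g : α → Fin 3 → ℝ} (hf : ∀ i, CB P (fun x => f x i))
    (hg : ∀ i, CB P (fun x => g x i)) : CB P (fun x => f x ⬝ᵥ g x) := by
  simp only [dotProduct]
  exact CB.sum (fun i _ => (hf i).mul (hg i))

theorem hdwa_dot {f g : ℝ → Fin 3 → ℝ} {f' g' : Fin 3 → ℝ} {s : Set ℝ} {t : ℝ}
    (hf : HasDerivWithinAt f f' s t) (hg : HasDerivWithinAt g g' s t) :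
    HasDerivWithinAt (fun u => f u ⬝ᵥ g u) (f' ⬝ᵥ g t + f t ⬝ᵥ g') s t := by
  have hfi : ∀ i, HasDerivWithinAt (fun u => f u i) (f' i) s t := fun i =>
    (ContinuousLinearMap.proj (R := ℝ) (φ := fun _ : Fin 3 => ℝ) i).hasFDerivAt.comp_hasDerivWithinAt t hf
  have hgi : ∀ i, HasDerivWithinAt (fun u => g u i) (g' i) s t := fun i =>
    (ContinuousLinearMap.proj (R := ℝ) (φ := fun _ : Fin 3 => ℝ) i).hasFDerivAt.comp_hasDerivWithinAt t hg
  have h := HasDerivWithinAt.fun_sum (u := Finset.univ)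
    (A := fun i u => f u i * g u i) (A' := fun i => f' i * g t i + f t i * g' i)
    (fun i _ => (hfi i).mul (hgi i))
  simpa [dotProduct, Finset.sum_add_distrib] using h

theorem hdwa_mulVec (M : Matrix (Fin 3) (Fin 3) ℝ) {f : ℝ → Fin 3 → ℝ} {f' : Fin 3 → ℝ}
    {s : Set ℝ} {t : ℝ} (hf : HasDerivWithinAt f f' s t) :
    HasDerivWithinAt (fun u => M *ᵥ f u) (M *ᵥ f') s t := by
  have h := (LinearMap.toContinuousLinearMap M.mulVecLin).hasFDerivAt.comp_hasDerivWithinAt t hf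
  exact h

theorem dot_mulVec_symm {M : Matrix (Fin 3) (Fin 3) ℝ} (hM : M.IsSymm) (a b : Fin 3 → ℝ) :
    a ⬝ᵥ (M *ᵥ b) = b ⬝ᵥ (M *ᵥ a) := by
  rw [Matrix.dotProduct_mulVec, ← Matrix.mulVec_transpose, hM.eq, dotProduct_comm]

theorem dot_self_nonneg (v : Fin 3 → ℝ) : 0 ≤ v ⬝ᵥ v := by
  simp only [dotProduct]
  exact Finset.sum_nonneg fun i _ => mul_self_nonneg _

end DPPAux

namespace DPPAux
section
variable (S : DPP)

/-- the domain-time cylinder -/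
def P (S : DPP) : Set ((Fin 3 → ℝ) × ℝ) := S.Ω ×ˢ Icc (0:ℝ) S.T

noncomputable def rho1 (x : Fin 3 → ℝ) : ℝ := S.γ / (2 * S.φ₁ x)
noncomputable def rho2 (x : Fin 3 → ℝ) : ℝ := S.γ / (2 * S.φ₂ x)

noncomputable def Fd (x : Fin 3 → ℝ) (s : ℝ) : ℝ :=
  (S.γ / (2 * S.φ₁ x)) * (S.w₁ x s ⬝ᵥ S.w₁ x s) + (S.γ / (2 * S.φ₂ x)) * (S.w₂ x s ⬝ᵥ S.w₂ x s)

noncomputable def Fd' (x : Fin 3 → ℝ) (s : ℝ) : ℝ :=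
  (S.γ / (2 * S.φ₁ x)) * (S.dw₁ x s ⬝ᵥ S.w₁ x s + S.w₁ x s ⬝ᵥ S.dw₁ x s)
  + (S.γ / (2 * S.φ₂ x)) * (S.dw₂ x s ⬝ᵥ S.w₂ x s + S.w₂ x s ⬝ᵥ S.dw₂ x s)

noncomputable def Hd (x : Fin 3 → ℝ) (s : ℝ) : ℝ :=
  S.μ * (S.w₁ x s ⬝ᵥ ((S.K₁ x)⁻¹ *ᵥ S.w₁ x s))
  + S.μ * (S.w₂ x s ⬝ᵥ ((S.K₂ x)⁻¹ *ᵥ S.w₂ x s))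
  + (S.β / S.μ) * ((S.q₁ x s - S.q₂ x s) * (S.q₁ x s - S.q₂ x s))

noncomputable def Hd' (x : Fin 3 → ℝ) (s : ℝ) : ℝ :=
  S.μ * (S.dw₁ x s ⬝ᵥ ((S.K₁ x)⁻¹ *ᵥ S.w₁ x s) + S.w₁ x s ⬝ᵥ ((S.K₁ x)⁻¹ *ᵥ S.dw₁ x s))
  + S.μ * (S.dw₂ x s ⬝ᵥ ((S.K₂ x)⁻¹ *ᵥ S.w₂ x s) + S.w₂ x s ⬝ᵥ ((S.K₂ x)⁻¹ *ᵥ S.dw₂ x s))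
  + (S.β / S.μ) * ((S.dq₁ x s - S.dq₂ x s) * (S.q₁ x s - S.q₂ x s)
      + (S.q₁ x s - S.q₂ x s) * (S.dq₁ x s - S.dq₂ x s))

noncomputable def Ad (x : Fin 3 → ℝ) (s : ℝ) : ℝ :=
  (S.γ / (2 * S.φ₁ x)) * (S.dw₁ x s ⬝ᵥ S.dw₁ x s) + (S.γ / (2 * S.φ₂ x)) * (S.dw₂ x s ⬝ᵥ S.dw₂ x s)

noncomputable def B1 (x : Fin 3 → ℝ) (s : ℝ) : ℝ :=
  S.w₁ x s ⬝ᵥ S.gq₁ x s + S.q₁ x s * divOf (S.Jw₁ x s)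
noncomputable def B2 (x : Fin 3 → ℝ) (s : ℝ) : ℝ :=
  S.w₂ x s ⬝ᵥ S.gq₂ x s + S.q₂ x s * divOf (S.Jw₂ x s)
noncomputable def B1' (x : Fin 3 → ℝ) (s : ℝ) : ℝ :=
  S.dw₁ x s ⬝ᵥ S.gq₁ x s + S.q₁ x s * divOf (S.Jdw₁ x s)
noncomputable def B2' (x : Fin 3 → ℝ) (s : ℝ) : ℝ :=
  S.dw₂ x s ⬝ᵥ S.gq₂ x s + S.q₂ x s * divOf (S.Jdw₂ x s)

noncomputable def Qd (lam : ℝ) (x : Fin 3 → ℝ) (s : ℝ) : ℝ :=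
  (S.γ / (2 * S.φ₁ x)) * ((S.w₁ x s + lam • S.dw₁ x s) ⬝ᵥ (S.w₁ x s + lam • S.dw₁ x s))
  + (S.γ / (2 * S.φ₂ x)) * ((S.w₂ x s + lam • S.dw₂ x s) ⬝ᵥ (S.w₂ x s + lam • S.dw₂ x s))

-- generic CB constructors from the hypotheses format
theorem cb_vec {g : (Fin 3 → ℝ) → ℝ → (Fin 3 → ℝ)}
    (hc : ContinuousOn (fun p : (Fin 3 → ℝ) × ℝ => g p.1 p.2) (P S))
    (hb : ∃ C : ℝ, ∀ x ∈ S.Ω, ∀ t ∈ Icc (0:ℝ) S.T, ‖g x t‖ ≤ C) :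
    ∀ i, CB (P S) (fun p => g p.1 p.2 i) := by
  intro i
  obtain ⟨C, hC⟩ := hb
  refine ⟨(continuous_apply i).comp_continuousOn hc, C, ?_⟩
  rintro ⟨x, t⟩ ⟨hx, ht⟩
  calc |g x t i| ≤ ‖g x t‖ := norm_le_pi_norm (g x t) i
    _ ≤ C := hC x hx t ht

theorem cb_scal {g : (Fin 3 → ℝ) → ℝ → ℝ}
    (hc : ContinuousOn (fun p : (Fin 3 → ℝ) × ℝ => g p.1 p.2) (P S))
    (hb : ∃ C : ℝ, ∀ x ∈ S.Ω, ∀ t ∈ Icc (0:ℝ) S.T, |g x t| ≤ C) :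
    CB (P S) (fun p => g p.1 p.2) := by
  obtain ⟨C, hC⟩ := hb
  exact ⟨hc, C, fun p hp => hC p.1 hp.1 p.2 hp.2⟩

theorem cb_spatial {g : (Fin 3 → ℝ) → ℝ} (hc : ContinuousOn g S.Ω)
    (hb : ∃ C : ℝ, ∀ x ∈ S.Ω, |g x| ≤ C) :
    CB (P S) (fun p => g p.1) := by
  obtain ⟨C, hC⟩ := hb
  refine ⟨hc.comp continuous_fst.continuousOn (fun p hp => hp.1), C, fun p hp => hC p.1 hp.1⟩

theorem cb_rho1 : CB (P S) (fun p => S.γ / (2 * S.φ₁ p.1)) := by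
  refine cb_spatial S (g := fun x => S.γ / (2 * S.φ₁ x)) ?_ ?_
  · exact continuousOn_const.div (continuousOn_const.mul S.hφ₁cont)
      (fun x hx => by have := S.hφ₁pos x hx; positivity)
  · obtain ⟨c, hc, C, hC⟩ := S.hφ₁bdd
    refine ⟨S.γ / (2 * c), fun x hx => ?_⟩
    have hp := S.hφ₁pos x hx
    rw [abs_of_nonneg (div_nonneg S.hγ.le (by positivity))]
    exact div_le_div_of_nonneg_left S.hγ.le (by positivity) (by linarith [(hC x hx).1])

theorem cb_rho2 : CB (P S) (fun p => S.γ / (2 * S.φ₂ p.1)) := by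
  refine cb_spatial S (g := fun x => S.γ / (2 * S.φ₂ x)) ?_ ?_
  · exact continuousOn_const.div (continuousOn_const.mul S.hφ₂cont)
      (fun x hx => by have := S.hφ₂pos x hx; positivity)
  · obtain ⟨c, hc, C, hC⟩ := S.hφ₂bdd
    refine ⟨S.γ / (2 * c), fun x hx => ?_⟩
    have hp := S.hφ₂pos x hx
    rw [abs_of_nonneg (div_nonneg S.hγ.le (by positivity))]
    exact div_le_div_of_nonneg_left S.hγ.le (by positivity) (by linarith [(hC x hx).1])

theorem cb_K1inv (i j : Fin 3) : CB (P S) (fun p => (S.K₁ p.1)⁻¹ i j) := by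
  obtain ⟨C, hC⟩ := S.hK₁invbdd
  exact cb_spatial S (S.hK₁invcont i j) ⟨C, fun x hx => hC x hx i j⟩

theorem cb_K2inv (i j : Fin 3) : CB (P S) (fun p => (S.K₂ p.1)⁻¹ i j) := by
  obtain ⟨C, hC⟩ := S.hK₂invbdd
  exact cb_spatial S (S.hK₂invcont i j) ⟨C, fun x hx => hC x hx i j⟩

theorem cb_w1 : ∀ i, CB (P S) (fun p => S.w₁ p.1 p.2 i) := cb_vec S S.hw₁cont S.hw₁bdd
theorem cb_w2 : ∀ i, CB (P S) (fun p => S.w₂ p.1 p.2 i) := cb_vec S S.hw₂cont S.hw₂bdd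
theorem cb_dw1 : ∀ i, CB (P S) (fun p => S.dw₁ p.1 p.2 i) := cb_vec S S.hdw₁cont S.hdw₁bdd
theorem cb_dw2 : ∀ i, CB (P S) (fun p => S.dw₂ p.1 p.2 i) := cb_vec S S.hdw₂cont S.hdw₂bdd
theorem cb_gq1 : ∀ i, CB (P S) (fun p => S.gq₁ p.1 p.2 i) := cb_vec S S.hgq₁cont S.hgq₁bdd
theorem cb_gq2 : ∀ i, CB (P S) (fun p => S.gq₂ p.1 p.2 i) := cb_vec S S.hgq₂cont S.hgq₂bdd
theorem cb_q1 : CB (P S) (fun p => S.q₁ p.1 p.2) := cb_scal S S.hq₁cont S.hq₁bdd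
theorem cb_q2 : CB (P S) (fun p => S.q₂ p.1 p.2) := cb_scal S S.hq₂cont S.hq₂bdd
theorem cb_dq1 : CB (P S) (fun p => S.dq₁ p.1 p.2) := cb_scal S S.hdq₁cont S.hdq₁bdd
theorem cb_dq2 : CB (P S) (fun p => S.dq₂ p.1 p.2) := cb_scal S S.hdq₂cont S.hdq₂bdd
theorem cb_divw1 : CB (P S) (fun p => divOf (S.Jw₁ p.1 p.2)) := cb_scal S S.hdivw₁cont S.hdivw₁bdd
theorem cb_divw2 : CB (P S) (fun p => divOf (S.Jw₂ p.1 p.2)) := cb_scal S S.hdivw₂cont S.hdivw₂bdd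
theorem cb_divdw1 : CB (P S) (fun p => divOf (S.Jdw₁ p.1 p.2)) := cb_scal S S.hdivdw₁cont S.hdivdw₁bdd
theorem cb_divdw2 : CB (P S) (fun p => divOf (S.Jdw₂ p.1 p.2)) := cb_scal S S.hdivdw₂cont S.hdivdw₂bdd

theorem cb_K1w1 : ∀ i, CB (P S) (fun p => ((S.K₁ p.1)⁻¹ *ᵥ S.w₁ p.1 p.2) i) := by
  intro i
  have h : (fun p : (Fin 3 → ℝ) × ℝ => ((S.K₁ p.1)⁻¹ *ᵥ S.w₁ p.1 p.2) i)
      = fun p => ∑ j, (S.K₁ p.1)⁻¹ i j * S.w₁ p.1 p.2 j := by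
    funext p; simp [Matrix.mulVec, dotProduct]
  rw [h]; exact CB.sum (fun j _ => (cb_K1inv S i j).mul (cb_w1 S j))

theorem cb_K2w2 : ∀ i, CB (P S) (fun p => ((S.K₂ p.1)⁻¹ *ᵥ S.w₂ p.1 p.2) i) := by
  intro i
  have h : (fun p : (Fin 3 → ℝ) × ℝ => ((S.K₂ p.1)⁻¹ *ᵥ S.w₂ p.1 p.2) i)
      = fun p => ∑ j, (S.K₂ p.1)⁻¹ i j * S.w₂ p.1 p.2 j := by
    funext p; simp [Matrix.mulVec, dotProduct]
  rw [h]; exact CB.sum (fun j _ => (cb_K2inv S i j).mul (cb_w2 S j))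

theorem cb_K1dw1 : ∀ i, CB (P S) (fun p => ((S.K₁ p.1)⁻¹ *ᵥ S.dw₁ p.1 p.2) i) := by
  intro i
  have h : (fun p : (Fin 3 → ℝ) × ℝ => ((S.K₁ p.1)⁻¹ *ᵥ S.dw₁ p.1 p.2) i)
      = fun p => ∑ j, (S.K₁ p.1)⁻¹ i j * S.dw₁ p.1 p.2 j := by
    funext p; simp [Matrix.mulVec, dotProduct]
  rw [h]; exact CB.sum (fun j _ => (cb_K1inv S i j).mul (cb_dw1 S j))

theorem cb_K2dw2 : ∀ i, CB (P S) (fun p => ((S.K₂ p.1)⁻¹ *ᵥ S.dw₂ p.1 p.2) i) := by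
  intro i
  have h : (fun p : (Fin 3 → ℝ) × ℝ => ((S.K₂ p.1)⁻¹ *ᵥ S.dw₂ p.1 p.2) i)
      = fun p => ∑ j, (S.K₂ p.1)⁻¹ i j * S.dw₂ p.1 p.2 j := by
    funext p; simp [Matrix.mulVec, dotProduct]
  rw [h]; exact CB.sum (fun j _ => (cb_K2inv S i j).mul (cb_dw2 S j))

theorem cb_Fd : CB (P S) (fun p => Fd S p.1 p.2) :=
  ((cb_rho1 S).mul (CB.dot (cb_w1 S) (cb_w1 S))).add ((cb_rho2 S).mul (CB.dot (cb_w2 S) (cb_w2 S)))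

theorem cb_Fd' : CB (P S) (fun p => Fd' S p.1 p.2) :=
  ((cb_rho1 S).mul ((CB.dot (cb_dw1 S) (cb_w1 S)).add (CB.dot (cb_w1 S) (cb_dw1 S)))).add
    ((cb_rho2 S).mul ((CB.dot (cb_dw2 S) (cb_w2 S)).add (CB.dot (cb_w2 S) (cb_dw2 S))))

theorem cb_Ad : CB (P S) (fun p => Ad S p.1 p.2) :=
  ((cb_rho1 S).mul (CB.dot (cb_dw1 S) (cb_dw1 S))).add
    ((cb_rho2 S).mul (CB.dot (cb_dw2 S) (cb_dw2 S)))

theorem cb_Hd : CB (P S) (fun p => Hd S p.1 p.2) :=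
  (((CB.const S.μ).mul (CB.dot (cb_w1 S) (cb_K1w1 S))).add
    ((CB.const S.μ).mul (CB.dot (cb_w2 S) (cb_K2w2 S)))).add
    ((CB.const (S.β / S.μ)).mul (((cb_q1 S).sub (cb_q2 S)).mul ((cb_q1 S).sub (cb_q2 S))))

theorem cb_Hd' : CB (P S) (fun p => Hd' S p.1 p.2) :=
  (((CB.const S.μ).mul ((CB.dot (cb_dw1 S) (cb_K1w1 S)).add (CB.dot (cb_w1 S) (cb_K1dw1 S)))).add
    ((CB.const S.μ).mul ((CB.dot (cb_dw2 S) (cb_K2w2 S)).add (CB.dot (cb_w2 S) (cb_K2dw2 S))))).add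
    ((CB.const (S.β / S.μ)).mul
      ((((cb_dq1 S).sub (cb_dq2 S)).mul ((cb_q1 S).sub (cb_q2 S))).add
        (((cb_q1 S).sub (cb_q2 S)).mul (((cb_dq1 S).sub (cb_dq2 S))))))

theorem cb_B1 : CB (P S) (fun p => B1 S p.1 p.2) :=
  (CB.dot (cb_w1 S) (cb_gq1 S)).add ((cb_q1 S).mul (cb_divw1 S))
theorem cb_B2 : CB (P S) (fun p => B2 S p.1 p.2) :=
  (CB.dot (cb_w2 S) (cb_gq2 S)).add ((cb_q2 S).mul (cb_divw2 S))
theorem cb_B1' : CB (P S) (fun p => B1' S p.1 p.2) :=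
  (CB.dot (cb_dw1 S) (cb_gq1 S)).add ((cb_q1 S).mul (cb_divdw1 S))
theorem cb_B2' : CB (P S) (fun p => B2' S p.1 p.2) :=
  (CB.dot (cb_dw2 S) (cb_gq2 S)).add ((cb_q2 S).mul (cb_divdw2 S))

theorem cb_Qd (lam : ℝ) : CB (P S) (fun p => Qd S lam p.1 p.2) := by
  have h1 : ∀ i, CB (P S) (fun p => (S.w₁ p.1 p.2 + lam • S.dw₁ p.1 p.2) i) := by
    intro i
    have : (fun p : (Fin 3 → ℝ) × ℝ => (S.w₁ p.1 p.2 + lam • S.dw₁ p.1 p.2) i)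
        = fun p => S.w₁ p.1 p.2 i + lam * S.dw₁ p.1 p.2 i := by
      funext p; simp [smul_eq_mul]
    rw [this]; exact (cb_w1 S i).add ((CB.const lam).mul (cb_dw1 S i))
  have h2 : ∀ i, CB (P S) (fun p => (S.w₂ p.1 p.2 + lam • S.dw₂ p.1 p.2) i) := by
    intro i
    have : (fun p : (Fin 3 → ℝ) × ℝ => (S.w₂ p.1 p.2 + lam • S.dw₂ p.1 p.2) i)
        = fun p => S.w₂ p.1 p.2 i + lam * S.dw₂ p.1 p.2 i := by
      funext p; simp [smul_eq_mul]
    rw [this]; exact (cb_w2 S i).add ((CB.const lam).mul (cb_dw2 S i))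
  exact ((cb_rho1 S).mul (CB.dot h1 h1)).add ((cb_rho2 S).mul (CB.dot h2 h2))

theorem CB.integrableOn {f : ((Fin 3 → ℝ) × ℝ) → ℝ} (h : CB (P S) f) {t : ℝ}
    (ht : t ∈ Icc (0:ℝ) S.T) : IntegrableOn (fun x => f (x, t)) S.Ω := by
  obtain ⟨hc, C, hC⟩ := h
  have hm : MeasurableSet S.Ω := S.hΩopen.measurableSet
  have hcon : ContinuousOn (fun x => f (x, t)) S.Ω :=
    hc.comp (continuousOn_id.prodMk continuousOn_const) (fun x hx => ⟨hx, ht⟩)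
  have : IsFiniteMeasure (volume.restrict S.Ω) :=
    ⟨by rw [Measure.restrict_apply_univ]; exact S.hΩbdd.measure_lt_top⟩
  refine Integrable.mono' (integrable_const C) (hcon.aestronglyMeasurable hm) ?_
  rw [ae_restrict_iff' hm]
  exact Filter.Eventually.of_forall fun x hx => by
    simpa [Real.norm_eq_abs] using hC (x, t) ⟨hx, ht⟩

theorem CB.bddForm {f : ((Fin 3 → ℝ) × ℝ) → ℝ} (h : CB (P S) f) :
    ∃ C : ℝ, ∀ x ∈ S.Ω, ∀ t ∈ Icc (0:ℝ) S.T, |f (x, t)| ≤ C := by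
  obtain ⟨-, C, hC⟩ := h
  exact ⟨C, fun x hx t ht => hC (x, t) ⟨hx, ht⟩⟩

end
end DPPAux

namespace DPPAux
section
variable (S : DPP)

theorem hdwa_Fd {x : Fin 3 → ℝ} (hx : x ∈ S.Ω) {t : ℝ} (ht : t ∈ Icc (0:ℝ) S.T) :
    HasDerivWithinAt (Fd S x) (Fd' S x t) (Icc (0:ℝ) S.T) t := by
  unfold Fd Fd'
  exact ((hdwa_dot (S.hdw₁ x hx t ht) (S.hdw₁ x hx t ht)).const_mul _).add
    ((hdwa_dot (S.hdw₂ x hx t ht) (S.hdw₂ x hx t ht)).const_mul _)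

theorem hdwa_Hd {x : Fin 3 → ℝ} (hx : x ∈ S.Ω) {t : ℝ} (ht : t ∈ Icc (0:ℝ) S.T) :
    HasDerivWithinAt (Hd S x) (Hd' S x t) (Icc (0:ℝ) S.T) t := by
  unfold Hd Hd'
  exact (((hdwa_dot (S.hdw₁ x hx t ht) (hdwa_mulVec _ (S.hdw₁ x hx t ht))).const_mul _).add
    ((hdwa_dot (S.hdw₂ x hx t ht) (hdwa_mulVec _ (S.hdw₂ x hx t ht))).const_mul _)).add
    ((((S.hdq₁ x hx t ht).sub (S.hdq₂ x hx t ht)).mul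
      ((S.hdq₁ x hx t ht).sub (S.hdq₂ x hx t ht))).const_mul _)

theorem pde1_dot (v : Fin 3 → ℝ) {x : Fin 3 → ℝ} (hx : x ∈ S.Ω) {t : ℝ}
    (ht : t ∈ Icc (0:ℝ) S.T) :
    (S.γ / S.φ₁ x) * (v ⬝ᵥ S.dw₁ x t) + S.μ * (v ⬝ᵥ ((S.K₁ x)⁻¹ *ᵥ S.w₁ x t))
      + v ⬝ᵥ S.gq₁ x t = 0 := by
  have h2 : v ⬝ᵥ ((S.γ / S.φ₁ x) • S.dw₁ x t + S.μ • ((S.K₁ x)⁻¹ *ᵥ S.w₁ x t) + S.gq₁ x t)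
      = 0 := by rw [S.pde₁ x hx t ht]; simp
  simpa [dotProduct_add, dotProduct_smul, smul_eq_mul] using h2

theorem pde2_dot (v : Fin 3 → ℝ) {x : Fin 3 → ℝ} (hx : x ∈ S.Ω) {t : ℝ}
    (ht : t ∈ Icc (0:ℝ) S.T) :
    (S.γ / S.φ₂ x) * (v ⬝ᵥ S.dw₂ x t) + S.μ * (v ⬝ᵥ ((S.K₂ x)⁻¹ *ᵥ S.w₂ x t))
      + v ⬝ᵥ S.gq₂ x t = 0 := by
  have h2 : v ⬝ᵥ ((S.γ / S.φ₂ x) • S.dw₂ x t + S.μ • ((S.K₂ x)⁻¹ *ᵥ S.w₂ x t) + S.gq₂ x t)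
      = 0 := by rw [S.pde₂ x hx t ht]; simp
  simpa [dotProduct_add, dotProduct_smul, smul_eq_mul] using h2

theorem divJdw1_eq {x : Fin 3 → ℝ} (hx : x ∈ S.Ω) {t : ℝ} (ht : t ∈ Icc (0:ℝ) S.T) :
    divOf (S.Jdw₁ x t) = -(S.β / S.μ) * (S.dq₁ x t - S.dq₂ x t) := by
  have hu := (uniqueDiffOn_Icc S.hT) t ht
  have h1 := S.hdivcomm₁ x hx t ht
  have h2 : HasDerivWithinAt (fun s => -(S.β / S.μ) * (S.q₁ x s - S.q₂ x s))
      (-(S.β / S.μ) * (S.dq₁ x t - S.dq₂ x t)) (Icc (0:ℝ) S.T) t :=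
    ((S.hdq₁ x hx t ht).sub (S.hdq₂ x hx t ht)).const_mul _
  have h3 : HasDerivWithinAt (fun s => divOf (S.Jw₁ x s))
      (-(S.β / S.μ) * (S.dq₁ x t - S.dq₂ x t)) (Icc (0:ℝ) S.T) t :=
    h2.congr (fun s hs => S.mass₁ x hx s hs) (S.mass₁ x hx t ht)
  rw [← h1.derivWithin hu, h3.derivWithin hu]

theorem divJdw2_eq {x : Fin 3 → ℝ} (hx : x ∈ S.Ω) {t : ℝ} (ht : t ∈ Icc (0:ℝ) S.T) :
    divOf (S.Jdw₂ x t) = (S.β / S.μ) * (S.dq₁ x t - S.dq₂ x t) := by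
  have hu := (uniqueDiffOn_Icc S.hT) t ht
  have h1 := S.hdivcomm₂ x hx t ht
  have h2 : HasDerivWithinAt (fun s => (S.β / S.μ) * (S.q₁ x s - S.q₂ x s))
      ((S.β / S.μ) * (S.dq₁ x t - S.dq₂ x t)) (Icc (0:ℝ) S.T) t :=
    ((S.hdq₁ x hx t ht).sub (S.hdq₂ x hx t ht)).const_mul _
  have h3 : HasDerivWithinAt (fun s => divOf (S.Jw₂ x s))
      ((S.β / S.μ) * (S.dq₁ x t - S.dq₂ x t)) (Icc (0:ℝ) S.T) t :=
    h2.congr (fun s hs => S.mass₂ x hx s hs) (S.mass₂ x hx t ht)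
  rw [← h1.derivWithin hu, h3.derivWithin hu]

theorem K1inv_symm {x : Fin 3 → ℝ} (hx : x ∈ S.Ω) : ((S.K₁ x)⁻¹).IsSymm := by
  show ((S.K₁ x)⁻¹)ᵀ = (S.K₁ x)⁻¹
  rw [Matrix.transpose_nonsing_inv, (S.hK₁symm x hx).eq]

theorem K2inv_symm {x : Fin 3 → ℝ} (hx : x ∈ S.Ω) : ((S.K₂ x)⁻¹).IsSymm := by
  show ((S.K₂ x)⁻¹)ᵀ = (S.K₂ x)⁻¹
  rw [Matrix.transpose_nonsing_inv, (S.hK₂symm x hx).eq]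

theorem ptwise1 {x : Fin 3 → ℝ} (hx : x ∈ S.Ω) {s : ℝ} (hs : s ∈ Icc (0:ℝ) S.T) :
    Fd' S x s = -Hd S x s + (-1) * B1 S x s + (-1) * B2 S x s := by
  have hφ1 : S.φ₁ x ≠ 0 := (S.hφ₁pos x hx).ne'
  have hφ2 : S.φ₂ x ≠ 0 := (S.hφ₂pos x hx).ne'
  have e1 := pde1_dot S (S.w₁ x s) hx hs
  have e2 := pde2_dot S (S.w₂ x s) hx hs
  have hrr1 : ∀ c : ℝ, S.γ / (2 * S.φ₁ x) * (c + c) = S.γ / S.φ₁ x * c := by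
    intro c; field_simp; ring
  have hrr2 : ∀ c : ℝ, S.γ / (2 * S.φ₂ x) * (c + c) = S.γ / S.φ₂ x * c := by
    intro c; field_simp; ring
  unfold Fd' Hd B1 B2
  rw [dotProduct_comm (S.dw₁ x s), dotProduct_comm (S.dw₂ x s),
    S.mass₁ x hx s hs, S.mass₂ x hx s hs, hrr1, hrr2]
  linear_combination e1 + e2

theorem ptwise2 {x : Fin 3 → ℝ} (hx : x ∈ S.Ω) {t : ℝ} (ht : t ∈ Icc (0:ℝ) S.T) :
    Hd' S x t = (-4) * Ad S x t + (-2) * B1' S x t + (-2) * B2' S x t := by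
  have hφ1 : S.φ₁ x ≠ 0 := (S.hφ₁pos x hx).ne'
  have hφ2 : S.φ₂ x ≠ 0 := (S.hφ₂pos x hx).ne'
  have e1 := pde1_dot S (S.dw₁ x t) hx ht
  have e2 := pde2_dot S (S.dw₂ x t) hx ht
  have hAd : (-4 : ℝ) * Ad S x t
      = (-2) * (S.γ / S.φ₁ x * (S.dw₁ x t ⬝ᵥ S.dw₁ x t))
        + (-2) * (S.γ / S.φ₂ x * (S.dw₂ x t ⬝ᵥ S.dw₂ x t)) := by
    unfold Ad; field_simp; ring
  unfold Hd' B1' B2'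
  rw [dot_mulVec_symm (K1inv_symm S hx) (S.w₁ x t) (S.dw₁ x t),
    dot_mulVec_symm (K2inv_symm S hx) (S.w₂ x t) (S.dw₂ x t),
    divJdw1_eq S hx ht, divJdw2_eq S hx ht, hAd]
  linear_combination 2 * e1 + 2 * e2

end
end DPPAux

namespace DPPAux
section
variable (S : DPP)

theorem hasDeriv_E {t : ℝ} (ht : t ∈ Icc (0:ℝ) S.T) :
    HasDerivWithinAt S.E (∫ x in S.Ω, Fd' S x t) (Icc (0:ℝ) S.T) t := by
  have h := S.leibniz (Fd S) (Fd' S) (fun x hx s hs => hdwa_Fd S hx hs)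
    (cb_Fd S).1 (cb_Fd' S).1 ((cb_Fd S).bddForm S) ((cb_Fd' S).bddForm S) t ht
  exact h

theorem hasDeriv_Hdint {t : ℝ} (ht : t ∈ Icc (0:ℝ) S.T) :
    HasDerivWithinAt (fun s => ∫ x in S.Ω, Hd S x s) (∫ x in S.Ω, Hd' S x t)
      (Icc (0:ℝ) S.T) t :=
  S.leibniz (Hd S) (Hd' S) (fun x hx s hs => hdwa_Hd S hx hs)
    (cb_Hd S).1 (cb_Hd' S).1 ((cb_Hd S).bddForm S) ((cb_Hd' S).bddForm S) t ht

theorem int_Fd'_eq {s : ℝ} (hs : s ∈ Icc (0:ℝ) S.T) :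
    (∫ x in S.Ω, Fd' S x s) = -∫ x in S.Ω, Hd S x s := by
  have hm : MeasurableSet S.Ω := S.hΩopen.measurableSet
  have hcong : (∫ x in S.Ω, Fd' S x s)
      = ∫ x in S.Ω, (-Hd S x s + (-1) * B1 S x s + (-1) * B2 S x s) :=
    setIntegral_congr_fun hm (fun x hx => ptwise1 S hx hs)
  have hIH : IntegrableOn (fun x => Hd S x s) S.Ω := (cb_Hd S).integrableOn S hs
  have hIB1 : IntegrableOn (fun x => B1 S x s) S.Ω := (cb_B1 S).integrableOn S hs
  have hIB2 : IntegrableOn (fun x => B2 S x s) S.Ω := (cb_B2 S).integrableOn S hs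
  have e1 : (∫ x in S.Ω, (-Hd S x s + (-1) * B1 S x s + (-1) * B2 S x s))
      = (∫ x in S.Ω, (-Hd S x s + (-1) * B1 S x s)) + ∫ x in S.Ω, (-1) * B2 S x s :=
    integral_add ((hIH.neg).add (hIB1.const_mul _)) (hIB2.const_mul _)
  have e2 : (∫ x in S.Ω, (-Hd S x s + (-1) * B1 S x s))
      = (∫ x in S.Ω, -Hd S x s) + ∫ x in S.Ω, (-1) * B1 S x s :=
    integral_add (hIH.neg) (hIB1.const_mul _)
  have e3 : (∫ x in S.Ω, -Hd S x s) = -∫ x in S.Ω, Hd S x s := integral_neg _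
  have e4 : (∫ x in S.Ω, (-1) * B1 S x s) = (-1) * ∫ x in S.Ω, B1 S x s :=
    integral_const_mul _ _
  have e5 : (∫ x in S.Ω, (-1) * B2 S x s) = (-1) * ∫ x in S.Ω, B2 S x s :=
    integral_const_mul _ _
  rw [hcong, e1, e2, e3, e4, e5]
  have h1 : (∫ x in S.Ω, B1 S x s) = 0 := by unfold B1; exact S.H1₁ s hs
  have h2 : (∫ x in S.Ω, B2 S x s) = 0 := by unfold B2; exact S.H1₂ s hs
  rw [h1, h2]; ring

theorem int_Hd'_eq {t : ℝ} (ht : t ∈ Icc (0:ℝ) S.T) :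
    (∫ x in S.Ω, Hd' S x t) = -(4 * ∫ x in S.Ω, Ad S x t) := by
  have hm : MeasurableSet S.Ω := S.hΩopen.measurableSet
  have hcong : (∫ x in S.Ω, Hd' S x t)
      = ∫ x in S.Ω, ((-4) * Ad S x t + (-2) * B1' S x t + (-2) * B2' S x t) :=
    setIntegral_congr_fun hm (fun x hx => ptwise2 S hx ht)
  have hIA : IntegrableOn (fun x => Ad S x t) S.Ω := (cb_Ad S).integrableOn S ht
  have hIB1 : IntegrableOn (fun x => B1' S x t) S.Ω := (cb_B1' S).integrableOn S ht
  have hIB2 : IntegrableOn (fun x => B2' S x t) S.Ω := (cb_B2' S).integrableOn S ht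
  have e1 : (∫ x in S.Ω, ((-4) * Ad S x t + (-2) * B1' S x t + (-2) * B2' S x t))
      = (∫ x in S.Ω, ((-4) * Ad S x t + (-2) * B1' S x t)) + ∫ x in S.Ω, (-2) * B2' S x t :=
    integral_add ((hIA.const_mul _).add (hIB1.const_mul _)) (hIB2.const_mul _)
  have e2 : (∫ x in S.Ω, ((-4) * Ad S x t + (-2) * B1' S x t))
      = (∫ x in S.Ω, (-4) * Ad S x t) + ∫ x in S.Ω, (-2) * B1' S x t :=
    integral_add (hIA.const_mul _) (hIB1.const_mul _)
  have e3 : (∫ x in S.Ω, (-4) * Ad S x t) = (-4) * ∫ x in S.Ω, Ad S x t :=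
    integral_const_mul _ _
  have e4 : (∫ x in S.Ω, (-2) * B1' S x t) = (-2) * ∫ x in S.Ω, B1' S x t :=
    integral_const_mul _ _
  have e5 : (∫ x in S.Ω, (-2) * B2' S x t) = (-2) * ∫ x in S.Ω, B2' S x t :=
    integral_const_mul _ _
  rw [hcong, e1, e2, e3, e4, e5]
  have h1 : (∫ x in S.Ω, B1' S x t) = 0 := by unfold B1'; exact S.H2₁ t ht
  have h2 : (∫ x in S.Ω, B2' S x t) = 0 := by unfold B2'; exact S.H2₂ t ht
  rw [h1, h2]; ring

theorem quad_nonneg {t : ℝ} (ht : t ∈ Icc (0:ℝ) S.T) (lam : ℝ) :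
    0 ≤ (∫ x in S.Ω, Fd S x t) + lam * (∫ x in S.Ω, Fd' S x t)
      + lam ^ 2 * (∫ x in S.Ω, Ad S x t) := by
  have hm : MeasurableSet S.Ω := S.hΩopen.measurableSet
  have hpt : ∀ x ∈ S.Ω, Qd S lam x t
      = Fd S x t + lam * Fd' S x t + lam ^ 2 * Ad S x t := by
    intro x hx
    unfold Qd Fd Fd' Ad
    simp only [add_dotProduct, dotProduct_add, smul_dotProduct,
      dotProduct_smul, smul_eq_mul]
    ring
  have h0 : 0 ≤ ∫ x in S.Ω, Qd S lam x t := by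
    refine setIntegral_nonneg hm (fun x hx => ?_)
    have h1 := S.hφ₁pos x hx
    have h2 := S.hφ₂pos x hx
    unfold Qd
    refine add_nonneg
      (mul_nonneg (div_nonneg S.hγ.le (by linarith)) (dot_self_nonneg _))
      (mul_nonneg (div_nonneg S.hγ.le (by linarith)) (dot_self_nonneg _))
  rw [setIntegral_congr_fun hm hpt] at h0
  have hIF : IntegrableOn (fun x => Fd S x t) S.Ω := (cb_Fd S).integrableOn S ht
  have hIF' : IntegrableOn (fun x => Fd' S x t) S.Ω := (cb_Fd' S).integrableOn S ht
  have hIA : IntegrableOn (fun x => Ad S x t) S.Ω := (cb_Ad S).integrableOn S ht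
  have e1 : (∫ x in S.Ω, (Fd S x t + lam * Fd' S x t + lam ^ 2 * Ad S x t))
      = (∫ x in S.Ω, (Fd S x t + lam * Fd' S x t)) + ∫ x in S.Ω, lam ^ 2 * Ad S x t :=
    integral_add (hIF.add (hIF'.const_mul lam)) (hIA.const_mul _)
  have e2 : (∫ x in S.Ω, (Fd S x t + lam * Fd' S x t))
      = (∫ x in S.Ω, Fd S x t) + ∫ x in S.Ω, lam * Fd' S x t :=
    integral_add hIF (hIF'.const_mul lam)
  have e3 : (∫ x in S.Ω, lam * Fd' S x t) = lam * ∫ x in S.Ω, Fd' S x t :=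
    integral_const_mul _ _
  have e4 : (∫ x in S.Ω, lam ^ 2 * Ad S x t) = lam ^ 2 * ∫ x in S.Ω, Ad S x t :=
    integral_const_mul _ _
  rwa [e1, e2, e3, e4] at h0

end
end DPPAux

open DPPAux in
/-- **Proposition 3.3 (logarithmic convexity of the energy)**: for the homogeneous DPP
difference system, for every `t ∈ [0,T]`, `(E′(t))² ≤ E(t)·E″(t)`. -/
theorem stmt_4 (S : DPP) :
    ∀ t ∈ Icc (0:ℝ) S.T,
      (derivWithin S.E (Icc (0:ℝ) S.T) t) ^ 2 ≤
        S.E t *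
          derivWithin (fun s => derivWithin S.E (Icc (0:ℝ) S.T) s) (Icc (0:ℝ) S.T) t := by
  intro t ht
  have hu : ∀ s ∈ Icc (0:ℝ) S.T, UniqueDiffWithinAt ℝ (Icc (0:ℝ) S.T) s :=
    uniqueDiffOn_Icc S.hT
  have hD1 : derivWithin S.E (Icc (0:ℝ) S.T) t = ∫ x in S.Ω, Fd' S x t :=
    (hasDeriv_E S ht).derivWithin (hu t ht)
  have heq : EqOn (fun s => derivWithin S.E (Icc (0:ℝ) S.T) s)
      (fun s => -∫ x in S.Ω, Hd S x s) (Icc (0:ℝ) S.T) := fun s hs => by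
    simp only
    rw [(hasDeriv_E S hs).derivWithin (hu s hs), int_Fd'_eq S hs]
  have hnegderiv : HasDerivWithinAt (fun s => -∫ x in S.Ω, Hd S x s)
      (-(∫ x in S.Ω, Hd' S x t)) (Icc (0:ℝ) S.T) t := (hasDeriv_Hdint S ht).neg
  have hD2 : derivWithin (fun s => derivWithin S.E (Icc (0:ℝ) S.T) s) (Icc (0:ℝ) S.T) t
      = 4 * ∫ x in S.Ω, Ad S x t := by
    rw [derivWithin_congr heq (heq ht), hnegderiv.derivWithin (hu t ht),
      int_Hd'_eq S ht, neg_neg]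
  have hEt : S.E t = ∫ x in S.Ω, Fd S x t := rfl
  rw [hD1, hD2, hEt]
  have key : ∀ lam : ℝ, 0 ≤ (∫ x in S.Ω, Ad S x t) * (lam * lam)
      + (∫ x in S.Ω, Fd' S x t) * lam + (∫ x in S.Ω, Fd S x t) := by
    intro lam
    have e : (∫ x in S.Ω, Ad S x t) * (lam * lam)
        + (∫ x in S.Ω, Fd' S x t) * lam + (∫ x in S.Ω, Fd S x t)
        = (∫ x in S.Ω, Fd S x t) + lam * (∫ x in S.Ω, Fd' S x t)
          + lam ^ 2 * (∫ x in S.Ω, Ad S x t) := by ring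
    rw [e]
    exact quad_nonneg S ht lam
  have hd := discrim_le_zero key
  rw [discrim] at hd
  nlinarith [hd]
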